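/- Let n_1, n_2 be positive integers with n_1 ≤ n_2 and n_1 even. Then every arrangement A of an n_1 × n_2 matrix has spread(A) ≥ n_1(n_2+1)/2 − 1. -/

import Mathlib

/-- The spread of an arrangement of an `n₁ × n₂` matrix (a bijection from cells
to `{0,…,n₁n₂ − 1}`, a zero-based version of `{1,…,n₁n₂}`): the maximum
difference of values over all pairs of cells in a common row or column. -/
def spread2 {n₁ n₂ : ℕ} (A : Fin n₁ × Fin n₂ ≃ Fin (n₁ * n₂)) : ℕ :=
  Finset.sup Finset.univ
    (fun p : (Fin n₁ × Fin n₂) × (Fin n₁ × Fin n₂) =>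
      if p.1.1 = p.2.1 ∨ p.1.2 = p.2.2 then Nat.dist (A p.1) (A p.2) else 0)

section Aux

variable {n₁ n₂ : ℕ} (A : Fin n₁ × Fin n₂ ≃ Fin (n₁ * n₂))

/-- Cells whose value is below `t`. -/
private def sBelow (t : ℕ) : Finset (Fin n₁ × Fin n₂) :=
  Finset.univ.filter fun x => (A x : ℕ) < t

/-- Number of rows touched by the cells of value below `t`. -/
private def rfun (t : ℕ) : ℕ := ((sBelow A t).image Prod.fst).card

/-- Number of columns touched by the cells of value below `t`. -/
private def cfun (t : ℕ) : ℕ := ((sBelow A t).image Prod.snd).card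

private lemma mem_sBelow {t : ℕ} {x : Fin n₁ × Fin n₂} :
    x ∈ sBelow A t ↔ (A x : ℕ) < t := by
  simp [sBelow]

private lemma dist_le_spread {x y : Fin n₁ × Fin n₂}
    (h : x.1 = y.1 ∨ x.2 = y.2) : Nat.dist (A x) (A y) ≤ spread2 A := by
  unfold spread2
  have h2 := Finset.le_sup
    (f := fun p : (Fin n₁ × Fin n₂) × (Fin n₁ × Fin n₂) =>
      if p.1.1 = p.2.1 ∨ p.1.2 = p.2.2 then Nat.dist (A p.1) (A p.2) else 0)
    (Finset.mem_univ (x, y))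
  simp only at h2
  rwa [if_pos h] at h2

private lemma card_sBelow {t : ℕ} (ht : t ≤ n₁ * n₂) : (sBelow A t).card = t := by
  have himg : sBelow A t
      = (Finset.univ.filter fun v : Fin (n₁ * n₂) => (v : ℕ) < t).image A.symm := by
    ext x
    simp only [mem_sBelow, Finset.mem_image, Finset.mem_filter, Finset.mem_univ, true_and]
    constructor
    · intro h
      exact ⟨A x, h, A.symm_apply_apply x⟩
    · rintro ⟨v, hv, rfl⟩
      rwa [Equiv.apply_symm_apply]
  rw [himg, Finset.card_image_of_injective _ A.symm.injective]
  rcases eq_or_lt_of_le ht with h | h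
  · have huniv : (Finset.univ.filter fun v : Fin (n₁ * n₂) => (v : ℕ) < t) = Finset.univ := by
      apply Finset.filter_true_of_mem
      intro v _
      have := v.2
      omega
    rw [huniv, Finset.card_univ, Fintype.card_fin, h]
  · have hIio : (Finset.univ.filter fun v : Fin (n₁ * n₂) => (v : ℕ) < t)
        = Finset.Iio (⟨t, h⟩ : Fin (n₁ * n₂)) := by
      ext v
      simp [Fin.lt_def]
    rw [hIio, Fin.card_Iio]

/-- `S t` fits inside the touched rows × touched columns. -/
private lemma fit {t : ℕ} (ht : t ≤ n₁ * n₂) : t ≤ rfun A t * cfun A t := by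
  calc t = (sBelow A t).card := (card_sBelow A ht).symm
    _ ≤ (((sBelow A t).image Prod.fst) ×ˢ ((sBelow A t).image Prod.snd)).card := by
        apply Finset.card_le_card
        intro x hx
        rw [Finset.mem_product]
        exact ⟨Finset.mem_image_of_mem _ hx, Finset.mem_image_of_mem _ hx⟩
    _ = _ := Finset.card_product _ _

/-- The main counting inequality: covered cells all have value `< t + s`. -/
private lemma main_ineq (t : ℕ) :
    rfun A t * n₂ + n₁ * cfun A t ≤ t + spread2 A + rfun A t * cfun A t := by
  classical
  set R := (sBelow A t).image Prod.fst with hR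
  set C := (sBelow A t).image Prod.snd with hC
  set X := R ×ˢ (Finset.univ : Finset (Fin n₂)) with hX
  set Y := (Finset.univ : Finset (Fin n₁)) ×ˢ C with hY
  have hinter : X ∩ Y = R ×ˢ C := by
    ext z
    simp only [hX, hY, Finset.mem_inter, Finset.mem_product, Finset.mem_univ,
      and_true, true_and]
  have hcovered : (X ∪ Y).card ≤ t + spread2 A := by
    have h1 : (X ∪ Y).card ≤ (Finset.range (t + spread2 A)).card := by
      apply Finset.card_le_card_of_injOn (fun x => (A x : ℕ))
      · intro x hx
        rw [Finset.mem_coe, Finset.mem_range]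
        beta_reduce
        have hkey : ∃ y ∈ sBelow A t, x.1 = y.1 ∨ x.2 = y.2 := by
          rcases Finset.mem_union.mp hx with hx | hx
          · have h1 := (Finset.mem_product.mp hx).1
            obtain ⟨y, hy, hyx⟩ := Finset.mem_image.mp h1
            exact ⟨y, hy, Or.inl hyx.symm⟩
          · have h1 := (Finset.mem_product.mp hx).2
            obtain ⟨y, hy, hyx⟩ := Finset.mem_image.mp h1
            exact ⟨y, hy, Or.inr hyx.symm⟩
        obtain ⟨y, hy, hxy⟩ := hkey
        have hd := dist_le_spread A hxy
        have hv : (A y : ℕ) < t := (mem_sBelow A).mp hy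
        have hdist : Nat.dist (A x) (A y)
            = (A x : ℕ) - (A y : ℕ) + ((A y : ℕ) - (A x : ℕ)) := rfl
        omega
      · intro a _ b _ h
        exact A.injective (Fin.val_injective h)
    simpa using h1
  have hXcard : X.card = R.card * n₂ := by
    rw [hX, Finset.card_product, Finset.card_univ, Fintype.card_fin]
  have hYcard : Y.card = n₁ * C.card := by
    rw [hY, Finset.card_product, Finset.card_univ, Fintype.card_fin]
  have hunion := Finset.card_union_add_card_inter X Y
  rw [hinter, hXcard, hYcard, Finset.card_product] at hunion
  have hgoal : R.card * n₂ + n₁ * C.card ≤ t + spread2 A + R.card * C.card := by omega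
  exact hgoal

private lemma rfun_mono {t u : ℕ} (h : t ≤ u) : rfun A t ≤ rfun A u := by
  apply Finset.card_le_card
  apply Finset.image_subset_image
  intro x hx
  rw [mem_sBelow] at hx ⊢
  omega

private lemma cfun_mono {t u : ℕ} (h : t ≤ u) : cfun A t ≤ cfun A u := by
  apply Finset.card_le_card
  apply Finset.image_subset_image
  intro x hx
  rw [mem_sBelow] at hx ⊢
  omega

private lemma image_step {γ : Type*} [DecidableEq γ] (f : Fin n₁ × Fin n₂ → γ) (t : ℕ) :
    ((sBelow A (t + 1)).image f).card ≤ ((sBelow A t).image f).card + 1 := by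
  classical
  have hsub : sBelow A (t + 1) ⊆ sBelow A t ∪ Finset.univ.filter (fun x => (A x : ℕ) = t) := by
    intro x hx
    rw [mem_sBelow] at hx
    rw [Finset.mem_union, mem_sBelow, Finset.mem_filter]
    simp only [Finset.mem_univ, true_and]
    omega
  calc ((sBelow A (t + 1)).image f).card
      ≤ ((sBelow A t ∪ Finset.univ.filter (fun x => (A x : ℕ) = t)).image f).card :=
        Finset.card_le_card (Finset.image_subset_image hsub)
    _ = ((sBelow A t).image f ∪ (Finset.univ.filter (fun x => (A x : ℕ) = t)).image f).card := by
        rw [Finset.image_union]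
    _ ≤ ((sBelow A t).image f).card
          + ((Finset.univ.filter (fun x => (A x : ℕ) = t)).image f).card :=
        Finset.card_union_le _ _
    _ ≤ ((sBelow A t).image f).card + 1 := by
        gcongr
        apply le_trans Finset.card_image_le
        apply Finset.card_le_one.mpr
        intro a ha b hb
        rw [Finset.mem_filter] at ha hb
        exact A.injective (Fin.val_injective (ha.2.trans hb.2.symm))

private lemma rfun_step (t : ℕ) : rfun A (t + 1) ≤ rfun A t + 1 := image_step A Prod.fst t

private lemma cfun_step (t : ℕ) : cfun A (t + 1) ≤ cfun A t + 1 := image_step A Prod.snd t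

private lemma rfun_zero : rfun A 0 = 0 := by simp [rfun, sBelow]

private lemma cfun_zero : cfun A 0 = 0 := by simp [cfun, sBelow]

private lemma rfun_top (h₂ : 1 ≤ n₂) : rfun A (n₁ * n₂) = n₁ := by
  have hSm : sBelow A (n₁ * n₂) = Finset.univ := by
    ext x
    simp only [mem_sBelow, Finset.mem_univ, iff_true]
    exact (A x).2
  have himg : (sBelow A (n₁ * n₂)).image Prod.fst = Finset.univ := by
    rw [hSm]
    apply Finset.eq_univ_of_forall
    intro a
    exact Finset.mem_image.mpr ⟨(a, ⟨0, h₂⟩), Finset.mem_univ _, rfl⟩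
  rw [rfun, himg, Finset.card_univ, Fintype.card_fin]

end Aux

set_option maxHeartbeats 1000000 in
/-- If `n₁ ≤ n₂` and `n₁` is even, every arrangement of an `n₁ × n₂` matrix
has spread at least `n₁(n₂+1)/2 − 1`. -/
theorem spread2_lower_bound_even (n₁ n₂ : ℕ) (h₁ : 1 ≤ n₁) (h₂ : 1 ≤ n₂)
    (hle : n₁ ≤ n₂) (heven : Even n₁)
    (A : Fin n₁ × Fin n₂ ≃ Fin (n₁ * n₂)) :
    n₁ * (n₂ + 1) / 2 - 1 ≤ spread2 A := by
  classical
  obtain ⟨p, hp⟩ := heven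
  have hp1 : 1 ≤ p := by omega
  -- first time p+1 rows are touched
  have hrm : p + 1 ≤ rfun A (n₁ * n₂) := by
    rw [rfun_top A h₂]
    omega
  have hex : ∃ t, p + 1 ≤ rfun A t := ⟨n₁ * n₂, hrm⟩
  set τ := Nat.find hex with hτdef
  have hτP : p + 1 ≤ rfun A τ := Nat.find_spec hex
  have hτm : τ ≤ n₁ * n₂ := Nat.find_le hrm
  have hτpos : τ ≠ 0 := by
    intro h
    rw [h, rfun_zero A] at hτP
    omega
  obtain ⟨t₀, ht₀⟩ : ∃ t₀, τ = t₀ + 1 := ⟨τ - 1, by omega⟩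
  have hmint₀ : ¬ (p + 1 ≤ rfun A t₀) := Nat.find_min hex (by omega)
  have hrt₀ : rfun A t₀ = p := by
    have h1 := rfun_step A t₀
    rw [← ht₀] at h1
    omega
  have ht₀fit : t₀ ≤ p * cfun A t₀ := by
    have h1 := fit A (t := t₀) (by omega)
    rwa [hrt₀] at h1
  have hrτ : rfun A τ = p + 1 := by
    have h1 := rfun_step A t₀
    rw [← ht₀] at h1
    omega
  have key : p * n₂ + p ≤ spread2 A + 1 := by
    by_cases hcase : cfun A t₀ + p ≤ n₂
    · -- Case A: few columns touched at time t₀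
      have h1 := main_ineq A τ
      rw [hrτ] at h1
      have hc2 : cfun A t₀ ≤ cfun A τ := cfun_mono A (by omega)
      have hτle : τ ≤ p * cfun A t₀ + 1 := by omega
      obtain ⟨g, hg⟩ : ∃ g, cfun A τ = cfun A t₀ + g := ⟨cfun A τ - cfun A t₀, by omega⟩
      have eA : n₁ * cfun A τ = (p + p) * cfun A τ := congrArg (· * cfun A τ) hp
      have m1 : (p + p) * cfun A τ = p * cfun A t₀ + p * cfun A t₀ + p * g + p * g := by
        rw [hg]; ring
      have m2 : (p + 1) * cfun A τ = p * cfun A t₀ + p * g + cfun A t₀ + g := by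
        rw [hg]; ring
      have m3 : (p + 1) * n₂ = p * n₂ + n₂ := by ring
      have m4 : g ≤ p * g := Nat.le_mul_of_pos_left g (by omega)
      linarith [h1, hτle, hcase, eA, m1, m2, m3, m4]
    · -- Case B: many columns touched at time t₀
      push_neg at hcase
      have hq : p ≤ n₂ := by omega
      have hex2 : ∃ t, n₂ - p + 1 ≤ cfun A t := ⟨t₀, by omega⟩
      set σ := Nat.find hex2 with hσdef
      have hσP : n₂ - p + 1 ≤ cfun A σ := Nat.find_spec hex2
      have hσle : σ ≤ t₀ := Nat.find_le (by omega)
      have hσpos : σ ≠ 0 := by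
        intro h
        rw [h, cfun_zero A] at hσP
        omega
      obtain ⟨u₀, hu₀⟩ : ∃ u₀, σ = u₀ + 1 := ⟨σ - 1, by omega⟩
      have hminu₀ : ¬ (n₂ - p + 1 ≤ cfun A u₀) := Nat.find_min hex2 (by omega)
      have hcσ : cfun A σ = n₂ - p + 1 := by
        have h1 := cfun_step A u₀
        rw [← hu₀] at h1
        omega
      have hρ : rfun A σ ≤ p := by
        have h1 := rfun_mono A hσle
        omega
      have hru₀ : rfun A u₀ ≤ rfun A σ := rfun_mono A (by omega)
      have hu₀fit : u₀ ≤ rfun A u₀ * cfun A u₀ := fit A (by omega)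
      have hu₀le : u₀ ≤ rfun A σ * (n₂ - p) := by
        calc u₀ ≤ rfun A u₀ * cfun A u₀ := hu₀fit
          _ ≤ rfun A σ * (n₂ - p) := Nat.mul_le_mul hru₀ (by omega)
      have h1 := main_ineq A σ
      rw [hcσ] at h1
      obtain ⟨q, hqq⟩ : ∃ q, n₂ = q + p := ⟨n₂ - p, by omega⟩
      have hqn : n₂ - p = q := by omega
      rw [hqn] at h1 hu₀le
      have hqp : p ≤ q := by omega
      obtain ⟨d, hd⟩ : ∃ d, p = rfun A σ + d := ⟨p - rfun A σ, by omega⟩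
      have hσle2 : σ ≤ rfun A σ * q + 1 := by omega
      have eB1 : n₁ * (q + 1) = (p + p) * (q + 1) := congrArg (· * (q + 1)) hp
      have eB2 : rfun A σ * n₂ = rfun A σ * (q + p) := congrArg (fun k => rfun A σ * k) hqq
      have eB3 : p * n₂ = p * (q + p) := congrArg (fun k => p * k) hqq
      have eB4 : p * p = rfun A σ * p + d * p := by rw [hd]; ring
      have eB5 : p * q = rfun A σ * q + d * q := by rw [hd]; ring
      have hdq : d * p ≤ d * q := mul_le_mul_right hqp d
      linarith [h1, hσle2, hd, hdq, eB1, eB2, eB3, eB4, eB5]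
  -- conclude
  have hdiv : n₁ * (n₂ + 1) = 2 * (p * n₂ + p) := by
    rw [hp]; ring
  rw [hdiv, Nat.mul_div_cancel_left _ (by norm_num : 0 < 2)]
  omega
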